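/- Let A be a pervasive proper uniform algebra on a compact Hausdorff space X. If φ is a character of A that is represented by a regular Borel probability measure λ on X such that λ({x}) = 0 for every x ∈ X with evaluation-at-x equal to φ (equivalently, λ has no point mass at a point representing φ), and there exists b ∈ supp λ and f ∈ A with φ(f) = 0, f(b) = 1, then supp λ = X. -/

import Mathlib

open MeasureTheory

variable {X : Type} [TopologicalSpace X] [CompactSpace X] [T2Space X]
  [MeasurableSpace X] [BorelSpace X]

/-- A uniform algebra `A` on `X` is pervasive if for every nonempty proper closed subset
`F` of `X`, the restrictions of elements of `A` to `F` are dense in `C(F, ℂ)`. -/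
def Pervasive (A : Subalgebra ℂ C(X, ℂ)) : Prop :=
  ∀ F : Set X, IsClosed F → F.Nonempty → F ≠ Set.univ →
    Dense ((fun f : C(X, ℂ) => f.restrict F) '' (A : Set C(X, ℂ)))

/-- The closed support of a measure. -/
def msupp (μ : Measure X) : Set X :=
  {x : X | ∀ U : Set X, IsOpen U → x ∈ U → μ U ≠ 0}

lemma msupp_compl_open (μ : Measure X) : IsOpen (msupp μ)ᶜ := by
  rw [isOpen_iff_forall_mem_open]
  intro x hx
  simp only [msupp, Set.mem_compl_iff, Set.mem_setOf_eq, not_forall] at hx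
  obtain ⟨U, hU, hxU, hU0⟩ := hx
  push_neg at hU0
  exact ⟨U, fun y hy hcon => (hcon U hU hy) hU0, hU, hxU⟩

lemma measure_msupp_compl (μ : Measure X) (hreg : μ.Regular) : μ (msupp μ)ᶜ = 0 := by
  by_contra h0
  obtain ⟨K, hKsub, hKcomp, hKpos⟩ :=
    hreg.innerRegular (msupp_compl_open μ) 0 (pos_iff_ne_zero.mpr h0)
  -- cover K by null open sets
  have hcover : ∀ x ∈ K, ∃ U : Set X, IsOpen U ∧ x ∈ U ∧ μ U = 0 := by
    intro x hx
    have := hKsub hx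
    simp only [msupp, Set.mem_compl_iff, Set.mem_setOf_eq, not_forall] at this
    obtain ⟨U, hU, hxU, hU0⟩ := this
    push_neg at hU0
    exact ⟨U, hU, hxU, hU0⟩
  have hcover' : ∀ x : X, ∃ U : Set X, IsOpen U ∧ (x ∈ K → x ∈ U) ∧ μ U = 0 := by
    intro x
    by_cases hx : x ∈ K
    · obtain ⟨U, h1, h2, h3⟩ := hcover x hx; exact ⟨U, h1, fun _ => h2, h3⟩
    · exact ⟨∅, isOpen_empty, fun h => absurd h hx, measure_empty⟩
  choose U hUo hxU hU0 using hcover'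
  obtain ⟨t, ht⟩ := hKcomp.elim_finite_subcover U hUo
    (fun x hx => Set.mem_iUnion.mpr ⟨x, hxU x hx⟩)
  have : μ K = 0 := le_antisymm (le_trans (measure_mono ht)
    (le_trans (measure_biUnion_finset_le t U) (by simp [hU0]))) (zero_le)
  exact absurd this (pos_iff_ne_zero.mp hKpos)

lemma contIntegrable {E : Type*} [NormedAddCommGroup E] {g : X → E} (hg : Continuous g) (μ : Measure X) [IsFiniteMeasure μ] :
    Integrable g μ := by
  rw [← integrableOn_univ]
  exact hg.continuousOn.integrableOn_compact isCompact_univ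

/-- For a proper pervasive algebra, a representing measure with no point mass at a point
representing `φ` (and witnessing nondensity of `A` on its support) has full support. -/
theorem stmt_6 (A : Subalgebra ℂ C(X, ℂ))
    (hclosed : IsClosed (A : Set C(X, ℂ)))
    (hsep : ∀ x y : X, x ≠ y → ∃ f ∈ A, f x ≠ f y)
    (hperv : Pervasive A) (hproper : A ≠ ⊤)
    (φ : A →ₐ[ℂ] ℂ)
    (lam : Measure X) [IsProbabilityMeasure lam] (hreg : lam.Regular)
    (hrep : ∀ f : A, φ f = ∫ x, (f : C(X, ℂ)) x ∂lam)
    (hnopm : ∀ x : X, (∀ f : A, (f : C(X, ℂ)) x = φ f) → lam {x} = 0)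
    (b : X) (hb : b ∈ msupp lam)
    (f : A) (hφf : φ f = 0) (hfb : (f : C(X, ℂ)) b = 1) :
    msupp lam = Set.univ := by
  by_contra hne
  set F := msupp lam with hF
  have hFclosed : IsClosed F := isOpen_compl_iff.mp (msupp_compl_open lam)
  have hFne : F.Nonempty := ⟨b, hb⟩
  haveI : CompactSpace F := isCompact_iff_compactSpace.mp hFclosed.isCompact
  have hdense := hperv F hFclosed hFne hne
  have hFc0 : lam Fᶜ = 0 := measure_msupp_compl lam hreg
  have haeF : ∀ᵐ x ∂lam, x ∈ F := by
    rw [ae_iff]; exact hFc0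
  set fc : C(X, ℂ) := (f : C(X, ℂ)) with hfc
  -- ∫ f·g = 0 for all g in A
  have key : ∀ g : A, ∫ x, fc x * (g : C(X, ℂ)) x ∂lam = 0 := by
    intro g
    have h1 : φ (f * g) = 0 := by rw [map_mul, hφf, zero_mul]
    have h2 := (hrep (f * g)).symm
    rw [h1] at h2
    simpa using h2
  have hIzero : ∫ x, fc x * (starRingEnd ℂ) (fc x) ∂lam = 0 := by
    set I := ∫ x, fc x * (starRingEnd ℂ) (fc x) ∂lam with hI
    have hCint : Integrable (fun x => fc x * (starRingEnd ℂ) (fc x)) lam :=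
      contIntegrable (fc.continuous.mul (Complex.continuous_conj.comp fc.continuous)) lam
    have hbound : ∀ ε > 0, ‖I‖ ≤ (‖fc‖ + 1) * ε := by
      intro ε hε
      obtain ⟨r, hrball, hrmem⟩ := Metric.dense_iff.mp hdense ((star fc).restrict F) ε hε
      obtain ⟨g, hgA, rfl⟩ := hrmem
      have hz : ∫ x, fc x * g x ∂lam = 0 := key ⟨g, hgA⟩
      have hgint : Integrable (fun x => fc x * g x) lam :=
        contIntegrable (fc.continuous.mul g.continuous) lam
      have heq : I = ∫ x, fc x * ((starRingEnd ℂ) (fc x) - g x) ∂lam := by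
        simp only [mul_sub]
        rw [integral_sub hCint hgint, hz, sub_zero]
      rw [heq]
      have hdistlt : dist (g.restrict F) ((star fc).restrict F) < ε :=
        Metric.mem_ball.mp hrball
      have habd : ∀ᵐ x ∂lam, ‖fc x * ((starRingEnd ℂ) (fc x) - g x)‖ ≤ (‖fc‖ + 1) * ε := by
        filter_upwards [haeF] with x hxF
        have h1 : ‖fc x‖ ≤ ‖fc‖ := fc.norm_coe_le_norm x
        have h2 : ‖(starRingEnd ℂ) (fc x) - g x‖ ≤ ε := by
          have := ContinuousMap.dist_apply_le_dist (f := g.restrict F)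
            (g := (star fc).restrict F) (⟨x, hxF⟩ : F)
          have h3 : dist (g x) ((starRingEnd ℂ) (fc x)) ≤ dist (g.restrict F) ((star fc).restrict F) := by
            simpa [ContinuousMap.restrict_apply] using this
          rw [norm_sub_rev]
          exact le_trans (le_of_eq (by rw [dist_eq_norm])) (le_trans h3 hdistlt.le)
        calc ‖fc x * ((starRingEnd ℂ) (fc x) - g x)‖
            = ‖fc x‖ * ‖(starRingEnd ℂ) (fc x) - g x‖ := norm_mul _ _
          _ ≤ (‖fc‖ + 1) * ε := by
              apply mul_le_mul (by linarith) h2 (norm_nonneg _) (by positivity)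
      have := norm_integral_le_of_norm_le_const habd
      simpa using this
    have hle : ‖I‖ ≤ 0 := by
      refine le_of_forall_pos_le_add fun ε hε => ?_
      have hpos : (0:ℝ) < ‖fc‖ + 1 := by positivity
      calc ‖I‖ ≤ (‖fc‖ + 1) * (ε / (‖fc‖ + 1)) := hbound _ (by positivity)
        _ = ε := by field_simp
        _ ≤ 0 + ε := by linarith
    exact norm_le_zero_iff.mp hle
  have hns : ∫ x, Complex.normSq (fc x) ∂lam = 0 := by
    have h : ∫ x, ((Complex.normSq (fc x) : ℝ) : ℂ) ∂lam = 0 := by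
      rw [← hIzero]
      apply integral_congr_ae
      filter_upwards with x
      rw [Complex.mul_conj]
    have h2 : ((∫ x, Complex.normSq (fc x) ∂lam : ℝ) : ℂ) = 0 := by
      rw [← h]; exact (integral_ofReal).symm
    exact_mod_cast h2
  have hint : Integrable (fun x => Complex.normSq (fc x)) lam :=
    contIntegrable (Complex.continuous_normSq.comp fc.continuous) lam
  have hae0 : (fun x => Complex.normSq (fc x)) =ᵐ[lam] 0 :=
    (integral_eq_zero_iff_of_nonneg (fun x => Complex.normSq_nonneg _) hint).mp hns
  have hnull : lam {x | fc x ≠ 0} = 0 := by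
    have h := ae_iff.mp hae0
    simpa [Complex.normSq_eq_zero] using h
  have hUopen : IsOpen {x | fc x ≠ 0} := by
    have : {x | fc x ≠ 0} = fc ⁻¹' ({0}ᶜ) := rfl
    rw [this]
    exact isOpen_compl_singleton.preimage fc.continuous
  have hbU : b ∈ {x | fc x ≠ 0} := by show fc b ≠ 0; rw [hfb]; exact one_ne_zero
  exact hb _ hUopen hbU hnull
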